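/- Let ζ = (s 0)² / ∑_{i < r} (s i)². If 0 < h ≤ ζ and α* ∈ (0, (s 0)²/2) is a minimizer of T_h over [0, (s 0)²/2], then α* ≥ (s 0)² · h. -/

import Mathlib

/-- The PRO function `T_h(α) = f₁(α) + h·f₂(α)` for Tikhonov regularization. -/
noncomputable def proT (r : ℕ) (hr : 0 < r) (s : Fin r → ℝ) (h : ℝ) (α : ℝ) : ℝ :=
  α ^ 2 / (α + (s ⟨0, hr⟩) ^ 2) ^ 2 + h * ∑ i, (s i) ^ 4 / (α + (s i) ^ 2) ^ 2

lemma proT_aux_deriv_term (c α : ℝ) (hc : α + c ≠ 0) :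
    HasDerivAt (fun x : ℝ => c ^ 2 / (x + c) ^ 2) (-2 * c ^ 2 / (α + c) ^ 3) α := by
  have h1 : HasDerivAt (fun x : ℝ => (x + c) ^ 2) (2 * (α + c)) α := by
    have := ((hasDerivAt_id α).add_const c).fun_pow 2
    simpa using this
  have h2 := (hasDerivAt_const α (c ^ 2)).fun_div h1 (pow_ne_zero 2 hc)
  refine h2.congr_deriv ?_
  field_simp
  ring

lemma proT_aux_deriv_f1 (c α : ℝ) (hc : α + c ≠ 0) :
    HasDerivAt (fun x : ℝ => x ^ 2 / (x + c) ^ 2) (2 * α * c / (α + c) ^ 3) α := by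
  have h1 : HasDerivAt (fun x : ℝ => (x + c) ^ 2) (2 * (α + c)) α := by
    have := ((hasDerivAt_id α).add_const c).fun_pow 2
    simpa using this
  have h0 : HasDerivAt (fun x : ℝ => x ^ 2) (2 * α) α := by
    simpa using hasDerivAt_pow 2 α
  have h2 := h0.fun_div h1 (pow_ne_zero 2 hc)
  refine h2.congr_deriv ?_
  field_simp
  ring

theorem proT_minimizer_lower_bound (r : ℕ) (hr : 0 < r) (s : Fin r → ℝ)
    (hpos : ∀ i, 0 < s i) (hmax : ∀ i, s i ≤ s ⟨0, hr⟩)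
    (ζ : ℝ) (hζ : ζ = (s ⟨0, hr⟩) ^ 2 / ∑ i, (s i) ^ 2)
    (h : ℝ) (hh : 0 < h) (hhζ : h ≤ ζ)
    (a : ℝ) (ha : a ∈ Set.Ioo (0 : ℝ) ((s ⟨0, hr⟩) ^ 2 / 2))
    (hamin : IsMinOn (proT r hr s h) (Set.Icc 0 ((s ⟨0, hr⟩) ^ 2 / 2)) a) :
    (s ⟨0, hr⟩) ^ 2 * h ≤ a := by
  set i0 : Fin r := ⟨0, hr⟩
  set c0 : ℝ := (s i0) ^ 2 with hc0
  have hc0pos : 0 < c0 := pow_pos (hpos i0) 2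
  obtain ⟨ha0, ha1⟩ := ha
  have hden : ∀ i : Fin r, 0 < a + (s i) ^ 2 := fun i =>
    add_pos ha0 (pow_pos (hpos i) 2)
  -- derivative of proT at a
  have hd : HasDerivAt (proT r hr s h)
      (2 * a * c0 / (a + c0) ^ 3 + h * ∑ i, (-2 * (s i) ^ 4 / (a + (s i) ^ 2) ^ 3)) a := by
    have h1 := proT_aux_deriv_f1 c0 a (ne_of_gt (hden i0))
    have h2 : HasDerivAt (fun x : ℝ => ∑ i, (s i) ^ 4 / (x + (s i) ^ 2) ^ 2)
        (∑ i, (-2 * (s i) ^ 4 / (a + (s i) ^ 2) ^ 3)) a := by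
      apply HasDerivAt.fun_sum
      intro i _
      have := proT_aux_deriv_term ((s i) ^ 2) a (ne_of_gt (hden i))
      rw [show (s i) ^ 4 = ((s i) ^ 2) ^ 2 by ring]
      exact this
    exact h1.add (h2.const_mul h)
  -- local min gives derivative zero
  have hnhds : Set.Icc (0 : ℝ) (c0 / 2) ∈ nhds a :=
    Filter.mem_of_superset (isOpen_Ioo.mem_nhds ⟨ha0, ha1⟩) Set.Ioo_subset_Icc_self
  have hloc : IsLocalMin (proT r hr s h) a := hamin.isLocalMin hnhds
  have hzero := hloc.hasDerivAt_eq_zero hd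
  -- single term bound on the sum
  have hsum : 2 * c0 ^ 2 / (a + c0) ^ 3 ≤ ∑ i, 2 * (s i) ^ 4 / (a + (s i) ^ 2) ^ 3 := by
    have h4 := Finset.single_le_sum (f := fun i : Fin r => 2 * (s i) ^ 4 / (a + (s i) ^ 2) ^ 3)
      (fun i _ => by positivity) (Finset.mem_univ i0)
    have : c0 ^ 2 = (s i0) ^ 4 := by rw [hc0]; ring
    rw [this]
    simpa using h4
  have hsum' : ∑ i, (-2 * (s i) ^ 4 / (a + (s i) ^ 2) ^ 3)
      = -∑ i, 2 * (s i) ^ 4 / (a + (s i) ^ 2) ^ 3 := by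
    rw [← Finset.sum_neg_distrib]
    congr 1; funext i; ring
  have key : h * (2 * c0 ^ 2 / (a + c0) ^ 3) ≤ 2 * a * c0 / (a + c0) ^ 3 := by
    have heq : 2 * a * c0 / (a + c0) ^ 3
        = h * ∑ i, 2 * (s i) ^ 4 / (a + (s i) ^ 2) ^ 3 := by
      rw [hsum'] at hzero; linarith
    rw [heq]
    exact mul_le_mul_of_nonneg_left hsum hh.le
  have hpow : 0 < (a + c0) ^ 3 := pow_pos (hden i0) 3
  rw [← sub_nonneg] at key
  have key2 : 0 ≤ (2 * a * c0 - h * (2 * c0 ^ 2)) / (a + c0) ^ 3 := by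
    convert key using 1
    field_simp
  have key3 := mul_nonneg key2 hpow.le
  rw [div_mul_cancel₀ _ (ne_of_gt hpow)] at key3
  nlinarith
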